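/- Let L_ff = [L₁ L₂; L₂ᵀ L_jj] be a symmetric positive definite block matrix, let W₁ be a d×d matrix, and let W, D be invertible d×d matrices with D ≻ 0 and W invertible. Then the extended matrix [L₁, L₂, 0; L₂ᵀ, L_jj + W₁ᵀDW₁, −W₁ᵀDW; 0, −WᵀDW₁, WᵀDW] is positive definite. -/

import Mathlib

open Matrix

section Aux
variable {m n : Type*} [Fintype m] [Fintype n]

omit [Fintype m] [Fintype n] in
lemma sumElim_ne_zero_left {x : m → ℝ} (hx : x ≠ 0) (y : n → ℝ) :
    Sum.elim x y ≠ 0 := by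
  intro h
  exact hx (funext fun i => congrFun h (Sum.inl i))

lemma aux_posDef_fromBlocks₁₁ [DecidableEq m]
    {A : Matrix m m ℝ} (B : Matrix m n ℝ) {D : Matrix n n ℝ}
    (hA : A.PosDef) (hS : (D - Bᴴ * A⁻¹ * B).PosDef) :
    (Matrix.fromBlocks A B Bᴴ D).PosDef := by
  haveI := hA.isUnit.invertible
  rw [Matrix.posDef_iff_dotProduct_mulVec]
  constructor
  · rw [Matrix.IsHermitian.fromBlocks₁₁ _ _ hA.1]; exact hS.1
  · intro x hx
    have hx' : x = Sum.elim (x ∘ Sum.inl) (x ∘ Sum.inr) := (Sum.elim_comp_inl_inr x).symm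
    rw [hx', Matrix.dotProduct_mulVec,
      Matrix.schur_complement_eq₁₁ B D _ _ hA.1]
    set u := (x ∘ Sum.inl) + (A⁻¹ * B) *ᵥ (x ∘ Sum.inr) with hu
    by_cases h2 : (x ∘ Sum.inr) = 0
    · have h1 : (x ∘ Sum.inl) ≠ 0 := by
        intro h1
        apply hx
        rw [hx', h1, h2]
        funext i; cases i <;> simp
      have hu0 : u ≠ 0 := by simpa [hu, h2] using h1
      have := hA.dotProduct_mulVec_pos hu0
      rw [Matrix.dotProduct_mulVec] at this
      have h2' := (hS.posSemidef).dotProduct_mulVec_nonneg (x ∘ Sum.inr)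
      rw [Matrix.dotProduct_mulVec] at h2'
      exact add_pos_of_pos_of_nonneg this h2'
    · have h2' := hS.dotProduct_mulVec_pos h2
      rw [Matrix.dotProduct_mulVec] at h2'
      have h1 := (hA.posSemidef).dotProduct_mulVec_nonneg u
      rw [Matrix.dotProduct_mulVec] at h1
      exact add_pos_of_nonneg_of_pos h1 h2'

lemma aux_posDef_fromBlocks₂₂ [DecidableEq n]
    {A : Matrix m m ℝ} (B : Matrix m n ℝ) {D : Matrix n n ℝ}
    (hD : D.PosDef) (hS : (A - B * D⁻¹ * Bᴴ).PosDef) :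
    (Matrix.fromBlocks A B Bᴴ D).PosDef := by
  haveI := hD.isUnit.invertible
  rw [Matrix.posDef_iff_dotProduct_mulVec]
  constructor
  · rw [Matrix.IsHermitian.fromBlocks₂₂ _ _ hD.1]; exact hS.1
  · intro x hx
    have hx' : x = Sum.elim (x ∘ Sum.inl) (x ∘ Sum.inr) := (Sum.elim_comp_inl_inr x).symm
    rw [hx', Matrix.dotProduct_mulVec,
      Matrix.schur_complement_eq₂₂ A B _ _ hD.1]
    set u := (D⁻¹ * Bᴴ) *ᵥ (x ∘ Sum.inl) + (x ∘ Sum.inr) with hu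
    by_cases h1 : (x ∘ Sum.inl) = 0
    · have h2 : (x ∘ Sum.inr) ≠ 0 := by
        intro h2
        apply hx
        rw [hx', h1, h2]
        funext i; cases i <;> simp
      have hu0 : u ≠ 0 := by simpa [hu, h1] using h2
      have := hD.dotProduct_mulVec_pos hu0
      rw [Matrix.dotProduct_mulVec] at this
      have h1' := (hS.posSemidef).dotProduct_mulVec_nonneg (x ∘ Sum.inl)
      rw [Matrix.dotProduct_mulVec] at h1'
      exact add_pos_of_pos_of_nonneg this h1'
    · have h1' := hS.dotProduct_mulVec_pos h1
      rw [Matrix.dotProduct_mulVec] at h1'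
      have h2 := (hD.posSemidef).dotProduct_mulVec_nonneg u
      rw [Matrix.dotProduct_mulVec] at h2
      exact add_pos_of_nonneg_of_pos h2 h1'

end Aux

theorem stmt_8 (a d : ℕ)
    (L₁ : Matrix (Fin a) (Fin a) ℝ) (L₂ : Matrix (Fin a) (Fin d) ℝ)
    (Ljj : Matrix (Fin d) (Fin d) ℝ)
    (hL₁ : L₁.IsSymm) (hLjj : Ljj.IsSymm)
    (hLff : (Matrix.fromBlocks L₁ L₂ L₂ᵀ Ljj).PosDef)
    (W₁ W D : Matrix (Fin d) (Fin d) ℝ)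
    (hD : D.PosDef) (hW : IsUnit W) :
    (Matrix.fromBlocks L₁
      (Matrix.of fun i (c : Fin d ⊕ Fin d) => Sum.elim (L₂ i) (fun _ => (0 : ℝ)) c)
      (Matrix.of fun i (c : Fin d ⊕ Fin d) => Sum.elim (L₂ i) (fun _ => (0 : ℝ)) c)ᵀ
      (Matrix.fromBlocks (Ljj + W₁ᵀ * D * W₁) (-(W₁ᵀ * D * W))
        (-(Wᵀ * D * W₁)) (Wᵀ * D * W))).PosDef := by
  classical
  set B : Matrix (Fin a) (Fin d ⊕ Fin d) ℝ :=
    Matrix.of fun i (c : Fin d ⊕ Fin d) => Sum.elim (L₂ i) (fun _ => (0 : ℝ)) c with hB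
  -- L₁ is positive definite
  have hL1pd : L₁.PosDef := by
    refine Matrix.PosDef.of_dotProduct_mulVec_pos ?_ fun x hx => ?_
    · rw [Matrix.IsHermitian, Matrix.conjTranspose_eq_transpose_of_trivial]; exact hL₁
    · have := hLff.dotProduct_mulVec_pos (x := Sum.elim x 0) (sumElim_ne_zero_left hx 0)
      simpa [Matrix.fromBlocks_mulVec, sumElim_dotProduct_sumElim] using this
  haveI := hL1pd.isUnit.invertible
  have hdetW : IsUnit W.det := (Matrix.isUnit_iff_isUnit_det W).mp hW
  have hdetWT : IsUnit Wᵀ.det := by rwa [Matrix.det_transpose]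
  have hdetD : IsUnit D.det := (Matrix.isUnit_iff_isUnit_det D).mp hD.isUnit
  have hDsymm : Dᵀ = D := hD.1
  -- Schur complement of the original block matrix
  have hS : (Ljj - L₂ᵀ * L₁⁻¹ * L₂).PosDef := by
    have hLffC : (Matrix.fromBlocks L₁ L₂ L₂ᴴ Ljj).PosDef := by
      rwa [Matrix.conjTranspose_eq_transpose_of_trivial]
    refine Matrix.PosDef.of_dotProduct_mulVec_pos ?_ fun y hy => ?_
    · have h := hLffC.1
      rw [Matrix.IsHermitian.fromBlocks₁₁ _ _ hL1pd.1] at h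
      rwa [Matrix.conjTranspose_eq_transpose_of_trivial] at h
    · have hne : Sum.elim (-((L₁⁻¹ * L₂) *ᵥ y)) y ≠ 0 := by
        intro h; exact hy (funext fun i => congrFun h (Sum.inr i))
      have := hLffC.dotProduct_mulVec_pos hne
      rw [Matrix.dotProduct_mulVec, Matrix.schur_complement_eq₁₁ L₂ Ljj _ _ hL1pd.1,
        neg_add_cancel] at this
      simpa [Matrix.conjTranspose_eq_transpose_of_trivial, Matrix.dotProduct_mulVec]
        using this
  -- Wᵀ * D * W is positive definite
  have hWDW : (Wᵀ * D * W).PosDef := by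
    refine Matrix.PosDef.of_dotProduct_mulVec_pos ?_ fun x hx => ?_
    · rw [← Matrix.conjTranspose_eq_transpose_of_trivial W]
      exact Matrix.isHermitian_conjTranspose_mul_mul W hD.1
    · have hWx : W *ᵥ x ≠ 0 := by
        intro h
        apply hx
        have : W⁻¹ *ᵥ (W *ᵥ x) = x := by
          rw [Matrix.mulVec_mulVec, Matrix.nonsing_inv_mul _ hdetW, Matrix.one_mulVec]
        rw [h, Matrix.mulVec_zero] at this
        exact this.symm
      have heq : star x ⬝ᵥ (Wᵀ * D * W) *ᵥ x = star (W *ᵥ x) ⬝ᵥ D *ᵥ (W *ᵥ x) := by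
        simp only [star_trivial, Matrix.dotProduct_mulVec, ← Matrix.vecMul_vecMul,
          Matrix.vecMul_transpose]
      rw [heq]
      exact hD.dotProduct_mulVec_pos hWx
  -- the cross-term computation
  have hBB : Bᴴ * L₁⁻¹ * B = Matrix.fromBlocks (L₂ᵀ * L₁⁻¹ * L₂) 0 0 0 := by
    ext i j
    cases i <;> cases j <;>
      simp [hB, Matrix.mul_apply, Matrix.conjTranspose_apply, Matrix.fromBlocks,
        Finset.sum_mul, Finset.mul_sum]
  -- the Schur complement identity for the new corner
  have hkey : (-(W₁ᵀ * D * W)) * (Wᵀ * D * W)⁻¹ * (-(W₁ᵀ * D * W))ᴴ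
      = W₁ᵀ * D * W₁ := by
    rw [Matrix.conjTranspose_eq_transpose_of_trivial, Matrix.transpose_neg,
      Matrix.transpose_mul, Matrix.transpose_mul, Matrix.transpose_transpose, hDsymm,
      Matrix.mul_inv_rev, Matrix.mul_inv_rev]
    simp only [neg_mul, mul_neg, neg_neg, Matrix.mul_assoc]
    rw [Matrix.mul_nonsing_inv_cancel_left _ _ hdetW,
      Matrix.nonsing_inv_mul_cancel_left _ _ hdetWT,
      Matrix.mul_nonsing_inv_cancel_left _ _ hdetD]
  -- assemble
  rw [← Matrix.conjTranspose_eq_transpose_of_trivial B]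
  apply aux_posDef_fromBlocks₁₁ B hL1pd
  rw [hBB]
  have hsub : Matrix.fromBlocks (Ljj + W₁ᵀ * D * W₁) (-(W₁ᵀ * D * W))
        (-(Wᵀ * D * W₁)) (Wᵀ * D * W) - Matrix.fromBlocks (L₂ᵀ * L₁⁻¹ * L₂) 0 0 0
      = Matrix.fromBlocks (Ljj + W₁ᵀ * D * W₁ - L₂ᵀ * L₁⁻¹ * L₂) (-(W₁ᵀ * D * W))
        (-(Wᵀ * D * W₁)) (Wᵀ * D * W) := by
    ext i j
    cases i <;> cases j <;> simp [Matrix.fromBlocks]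
  rw [hsub]
  have hBL : -(Wᵀ * D * W₁) = (-(W₁ᵀ * D * W))ᴴ := by
    rw [Matrix.conjTranspose_eq_transpose_of_trivial, Matrix.transpose_neg,
      Matrix.transpose_mul, Matrix.transpose_mul, Matrix.transpose_transpose, hDsymm,
      Matrix.mul_assoc]
  rw [hBL]
  apply aux_posDef_fromBlocks₂₂ _ hWDW
  rw [hkey]
  have : Ljj + W₁ᵀ * D * W₁ - L₂ᵀ * L₁⁻¹ * L₂ - W₁ᵀ * D * W₁
      = Ljj - L₂ᵀ * L₁⁻¹ * L₂ := by abel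
  rw [this]
  exact hS
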